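/- An orientation-preserving homeomorphism of the closed disc which fixes at least one boundary point and has some finite iterate equal to the identity, must itself be the identity on the boundary circle. -/

import Mathlib

/-- The point `e^{2πit}` on the boundary circle of the unit disc. -/
noncomputable def eCirc (t : ℝ) : ℂ := Complex.exp ((2 * Real.pi * t : ℝ) * Complex.I)

lemma eCirc_eq_iff (a b : ℝ) : eCirc a = eCirc b ↔ ∃ m : ℤ, a = b + m := by
  unfold eCirc
  rw [Complex.exp_eq_exp_iff_exists_int]
  constructor
  · rintro ⟨m, hm⟩
    refine ⟨m, ?_⟩
    have h2 : (2 * Real.pi * a : ℂ) = 2 * Real.pi * b + m * (2 * Real.pi) := by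
      apply mul_right_cancel₀ Complex.I_ne_zero
      push_cast at hm ⊢
      linear_combination hm
    have h3 : (2 * Real.pi * a : ℝ) = 2 * Real.pi * b + m * (2 * Real.pi) := by
      exact_mod_cast h2
    have h2pi : (2 * Real.pi : ℝ) ≠ 0 := by positivity
    apply mul_left_cancel₀ h2pi
    rw [h3]; ring
  · rintro ⟨m, rfl⟩
    exact ⟨m, by push_cast; ring⟩

lemma eCirc_mem_sphere (t : ℝ) : eCirc t ∈ Metric.sphere (0 : ℂ) 1 := by
  have := Complex.norm_exp_ofReal_mul_I (2*Real.pi*t)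
  simp only [eCirc, mem_sphere_iff_norm, sub_zero]
  simpa using this

lemma eCirc_arg (z : ℂ) (hz : z ∈ Metric.sphere (0 : ℂ) 1) :
    eCirc (Complex.arg z / (2 * Real.pi)) = z := by
  have hz1 : ‖z‖ = 1 := by simpa using hz
  have hpi : (2 * Real.pi : ℝ) ≠ 0 := by positivity
  have : (2 * Real.pi * (Complex.arg z / (2 * Real.pi)) : ℝ) = Complex.arg z := by
    field_simp
  rw [eCirc, this]
  have := Complex.norm_mul_exp_arg_mul_I z
  rw [hz1] at this
  simpa using this

/-- an orientation-preserving homeomorphism `β` of the closed unit disc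
(orientation-preservation of the boundary restriction being encoded by a strictly
monotone degree-one lift `F`), fixing at least one boundary point and having some
finite iterate equal to the identity, is the identity on the boundary circle. -/
theorem disc_homeo_no_nontrivial_roots_of_identity
    (β : ℂ → ℂ) (F : ℝ → ℝ)
    (hcont : ContinuousOn β (Metric.closedBall (0 : ℂ) 1))
    (hbij : Set.BijOn β (Metric.closedBall (0 : ℂ) 1) (Metric.closedBall (0 : ℂ) 1))
    (hsph : Set.MapsTo β (Metric.sphere (0 : ℂ) 1) (Metric.sphere (0 : ℂ) 1))
    (hF : StrictMono F) (hFper : ∀ t, F (t + 1) = F t + 1)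
    (hlift : ∀ t, β (eCirc t) = eCirc (F t))
    (p : ℂ) (hp : p ∈ Metric.sphere (0 : ℂ) 1) (hfix : β p = p)
    (n : ℕ) (hn : 1 ≤ n) (hord : ∀ z ∈ Metric.closedBall (0 : ℂ) 1, β^[n] z = z) :
    ∀ z ∈ Metric.sphere (0 : ℂ) 1, β z = z := by
  -- F commutes with integer translations
  have hFint : ∀ (m : ℤ) (t : ℝ), F (t + m) = F t + m := by
    intro m
    induction m using Int.induction_on with
    | zero => simp
    | succ j ih =>
      intro t
      have h2 := hFper (t + ((j:ℤ):ℝ))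
      have h3 := ih t
      push_cast at h2 h3 ⊢
      ring_nf at h2 h3 ⊢
      linarith
    | pred j ih =>
      intro t
      have h1 : F ((t + (-(j:ℤ) - 1)) + 1) = F (t + (-(j:ℤ) - 1)) + 1 := hFper _
      have h2 : (t + (-(j:ℤ) - 1)) + 1 = t + (-(j:ℤ)) := by push_cast; ring
      rw [h2] at h1
      have := ih t
      push_cast at this h1 ⊢
      linarith
  -- iterates commute with integer translations
  have hIint : ∀ (j : ℕ) (m : ℤ) (t : ℝ), F^[j] (t + m) = F^[j] t + m := by
    intro j
    induction j with
    | zero => simp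
    | succ j ih =>
      intro m t
      rw [Function.iterate_succ_apply', Function.iterate_succ_apply', ih, hFint]
  -- iterates lift
  have hiterlift : ∀ (j : ℕ) (t : ℝ), β^[j] (eCirc t) = eCirc (F^[j] t) := by
    intro j
    induction j with
    | zero => simp
    | succ j ih =>
      intro t
      rw [Function.iterate_succ_apply', ih, hlift, Function.iterate_succ_apply' F j t]
  -- fixed point
  set t₀ : ℝ := Complex.arg p / (2 * Real.pi) with ht₀def
  have hpt : eCirc t₀ = p := eCirc_arg p hp
  obtain ⟨k, hk⟩ : ∃ k : ℤ, F t₀ = t₀ + k := by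
    have : eCirc (F t₀) = eCirc t₀ := by rw [← hlift, hpt, hfix]
    exact (eCirc_eq_iff _ _).mp this
  -- F^[j] t₀ = t₀ + j*k
  have hiterfix : ∀ j : ℕ, F^[j] t₀ = t₀ + j * k := by
    intro j
    induction j with
    | zero => simp
    | succ j ih =>
      rw [Function.iterate_succ_apply', ih]
      have : t₀ + (j:ℝ) * k = t₀ + ((j * k : ℤ) : ℝ) := by push_cast; ring
      rw [this, hFint, hk]
      push_cast; ring
  -- F^[n] t - t is an integer
  have hint : ∀ t : ℝ, ∃ m : ℤ, F^[n] t = t + m := by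
    intro t
    have hmem : eCirc t ∈ Metric.closedBall (0 : ℂ) 1 :=
      Metric.sphere_subset_closedBall (eCirc_mem_sphere t)
    have : eCirc (F^[n] t) = eCirc t := by rw [← hiterlift, hord _ hmem]
    exact (eCirc_eq_iff _ _).mp this
  have hSM : StrictMono (F^[n]) := hF.iterate n
  -- key: F^[n] t = t + n*k for all t
  have hkey : ∀ t : ℝ, F^[n] t = t + n * k := by
    intro t
    set m : ℤ := ⌊t - t₀⌋ with hmdef
    set s : ℝ := t - m with hsdef
    have hs1 : t₀ ≤ s := by
      have := Int.floor_le (t - t₀); simp only [hsdef, hmdef]; linarith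
    have hs2 : s < t₀ + 1 := by
      have := Int.lt_floor_add_one (t - t₀); simp only [hsdef, hmdef]; linarith
    have hskey : F^[n] s = s + n * k := by
      rcases eq_or_lt_of_le hs1 with heq | hlt
      · rw [← heq]; exact hiterfix n
      · obtain ⟨m', hm'⟩ := hint s
        have hlow : F^[n] t₀ < F^[n] s := hSM hlt
        have hhigh : F^[n] s < F^[n] (t₀ + 1) := hSM hs2
        have h1 : F^[n] t₀ = t₀ + n * k := hiterfix n
        have h2 : F^[n] (t₀ + 1) = F^[n] t₀ + 1 := by
          have := hIint n 1 t₀; push_cast at this; exact this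
        rw [h1] at hlow
        rw [h2, h1] at hhigh
        rw [hm'] at hlow hhigh
        -- t₀ + nk < s + m' < t₀ + nk + 1, with t₀ < s < t₀ + 1
        have hge : ((n : ℤ) * k : ℤ) ≤ m' := by
          have : ((n : ℝ) * k : ℝ) - 1 < m' := by push_cast; linarith
          have h3 : (((n : ℤ) * k : ℤ) : ℝ) - 1 < (m' : ℝ) := by push_cast; push_cast at this; linarith
          have h4 : ((n : ℤ) * k : ℤ) - 1 < m' := by exact_mod_cast (by push_cast at h3 ⊢; linarith : ((((n : ℤ) * k : ℤ) - 1 : ℤ) : ℝ) < (m' : ℝ))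
          omega
        have hle : m' ≤ ((n : ℤ) * k : ℤ) := by
          have h3 : (m' : ℝ) < (((n : ℤ) * k : ℤ) : ℝ) + 1 := by push_cast; linarith
          have h4 : m' < ((n : ℤ) * k : ℤ) + 1 := by exact_mod_cast (by push_cast at h3 ⊢; linarith : ((m' : ℝ)) < ((((n : ℤ) * k : ℤ) + 1 : ℤ) : ℝ))
          omega
        have : m' = ((n : ℤ) * k : ℤ) := le_antisymm hle hge
        rw [hm', this]; push_cast; ring
    have : F^[n] t = F^[n] (s + m) := by rw [hsdef]; ring_nf
    rw [this, hIint, hskey, hsdef]; push_cast; ring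
  -- F t = t + k for all t
  have hFeq : ∀ t : ℝ, F t = t + k := by
    intro t
    by_contra hne
    rcases lt_or_gt_of_ne hne with hlt | hgt
    · -- F t < t + k ⇒ F^[j] t < t + j*k for j ≥ 1
      have hstep : ∀ j : ℕ, F^[j+1] t < t + (j+1) * k := by
        intro j
        induction j with
        | zero => simpa using hlt
        | succ j ih =>
          have : F (F^[j+1] t) < F (t + ((j+1) * k : ℤ)) := by
            apply hF
            push_cast
            push_cast at ih
            linarith
          rw [hFint] at this
          rw [Function.iterate_succ_apply']
          push_cast at this ⊢
          linarith
      obtain ⟨j, rfl⟩ : ∃ j, n = j + 1 := ⟨n - 1, by omega⟩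
      have := hstep j
      rw [hkey t] at this
      push_cast at this
      linarith
    · have hstep : ∀ j : ℕ, F^[j+1] t > t + (j+1) * k := by
        intro j
        induction j with
        | zero => simpa using hgt
        | succ j ih =>
          have : F (t + ((j+1) * k : ℤ)) < F (F^[j+1] t) := by
            apply hF
            push_cast
            push_cast at ih
            linarith
          rw [hFint] at this
          rw [Function.iterate_succ_apply']
          push_cast at this ⊢
          linarith
      obtain ⟨j, rfl⟩ : ∃ j, n = j + 1 := ⟨n - 1, by omega⟩
      have := hstep j
      rw [hkey t] at this
      push_cast at this
      linarith
  -- conclude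
  intro z hz
  have hzt : eCirc (Complex.arg z / (2 * Real.pi)) = z := eCirc_arg z hz
  rw [← hzt, hlift, hFeq]
  exact (eCirc_eq_iff _ _).mpr ⟨k, rfl⟩
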